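/- There exists an absolute constant C > 0 such that for all reals 0 < μ ≤ L and every δ ∈ (0, 1/2], there exists a real polynomial q of degree at most C·√(L/μ)·log(1/δ) + C satisfying q(0) = 1 and |q(x)| ≤ 4δ for all x ∈ [μ, L]. -/

import Mathlib

open Polynomial Polynomial.Chebyshev Real

lemma T_real_cosh (t : ℝ) (n : ℤ) : (T ℝ n).eval (Real.cosh t) = Real.cosh (n * t) := by
  have h := T_complex_cos (t * Complex.I) n
  rw [Complex.cos_mul_I] at h
  have h2 : Complex.cos ((n : ℂ) * (t * Complex.I)) = Complex.cosh ((n : ℂ) * t) := by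
    rw [← Complex.cos_mul_I]; ring_nf
  rw [h2] at h
  rw [← Complex.ofReal_cosh] at h
  have h4 := (complex_ofReal_eval_T (Real.cosh t) n)
  rw [← h4] at h
  have h5 : ((n : ℂ) * (t : ℂ)) = (((n : ℝ) * t : ℝ) : ℂ) := by norm_cast
  rw [h5, ← Complex.ofReal_cosh] at h
  exact_mod_cast h

lemma natDegree_T_le : ∀ n : ℕ, (T ℝ n).natDegree ≤ n := by
  intro n
  induction n using Nat.strong_induction_on with
  | _ n ih =>
    match n with
    | 0 => simp [T_zero]
    | 1 => rw [Nat.cast_one, T_one]; exact natDegree_X_le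
    | (n+2) =>
      have h : T ℝ ((n:ℤ)+2) = 2 * X * T ℝ ((n:ℤ)+1) - T ℝ n := T_add_two ℝ n
      have e : ((n+2 : ℕ) : ℤ) = (n:ℤ) + 2 := by norm_cast
      rw [e, h]
      refine (natDegree_sub_le _ _).trans ?_
      have h1 : (2 * X * T ℝ ((n:ℤ)+1)).natDegree ≤ n + 2 := by
        refine (natDegree_mul_le).trans ?_
        have : ((n:ℤ)+1) = ((n+1 : ℕ) : ℤ) := by norm_cast
        rw [this]
        have := ih (n+1) (by omega)
        have h2X : (2 * X : ℝ[X]).natDegree ≤ 1 := by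
          refine natDegree_mul_le.trans ?_
          simpa using natDegree_X_le
        omega
      have h2 : (T ℝ (n:ℤ)).natDegree ≤ n + 2 := (ih n (by omega)).trans (by omega)
      omega

set_option maxHeartbeats 1000000

/-- The polynomial existence claim behind the `√κ·log(1/δ)` bound for Conjugate Gradient:
there is a polynomial of degree `O(√(L/μ)·log(1/δ))` equal to `1` at `0` and of magnitude at
most `4δ` on `[μ, L]`. -/
theorem conjugate_gradient_poly :
    ∃ C : ℝ, 0 < C ∧ ∀ μ L : ℝ, 0 < μ → μ ≤ L → ∀ δ : ℝ, δ ∈ Set.Ioc (0 : ℝ) (1 / 2) →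
      ∃ q : Polynomial ℝ,
        (q.natDegree : ℝ) ≤ C * Real.sqrt (L / μ) * Real.log (1 / δ) + C ∧
        q.eval 0 = 1 ∧
        ∀ x ∈ Set.Icc μ L, |q.eval x| ≤ 4 * δ := by
  refine ⟨2, by norm_num, ?_⟩
  intro μ L hμ hμL δ hδ
  obtain ⟨hδ0, hδ2⟩ := hδ
  have hlogδ : 0 ≤ Real.log (1/δ) := Real.log_nonneg (by rw [le_div_iff₀ hδ0]; linarith)
  have hs1 : (1:ℝ) ≤ Real.sqrt (L/μ) := by
    rw [show (1:ℝ) = Real.sqrt 1 by simp]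
    exact Real.sqrt_le_sqrt ((one_le_div hμ).mpr hμL)
  rcases eq_or_lt_of_le hμL with rfl | hlt
  · refine ⟨1 - Polynomial.C (1/μ) * Polynomial.X, ?_, by simp, ?_⟩
    · have hd : (1 - Polynomial.C (1/μ) * Polynomial.X : ℝ[X]).natDegree ≤ 1 := by
        refine (natDegree_sub_le _ _).trans ?_
        simp only [natDegree_one]
        have := (natDegree_C_mul_le (1/μ) (Polynomial.X : ℝ[X])).trans natDegree_X_le
        omega
      have hcast : ((1 - Polynomial.C (1/μ) * Polynomial.X : ℝ[X]).natDegree : ℝ) ≤ 1 := by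
        exact_mod_cast hd
      nlinarith [mul_nonneg (mul_nonneg (by norm_num : (0:ℝ) ≤ 2)
        (by linarith : (0:ℝ) ≤ Real.sqrt (μ/μ))) hlogδ]
    · intro x hx
      have hxμ : x = μ := le_antisymm hx.2 hx.1
      subst hxμ
      simp only [eval_sub, eval_one, eval_mul, eval_C, eval_X, one_div,
        inv_mul_cancel₀ hμ.ne', sub_self, abs_zero]
      linarith
  · set s := Real.sqrt (L/μ) with hsdef
    have hs : 1 < s := by
      rw [hsdef, show (1:ℝ) = Real.sqrt 1 by simp]
      exact Real.sqrt_lt_sqrt (by norm_num) ((one_lt_div hμ).mpr hlt)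
    have hs0 : 0 < s - 1 := by linarith
    set t := Real.log ((s+1)/(s-1)) with htdef
    have hfrac : 1 < (s+1)/(s-1) := by rw [lt_div_iff₀ hs0]; linarith
    have ht : 0 < t := Real.log_pos hfrac
    have hts : 1/s ≤ t := by
      have h1 : Real.log ((s-1)/(s+1)) ≤ (s-1)/(s+1) - 1 :=
        Real.log_le_sub_one_of_pos (by positivity)
      have h2 : Real.log ((s-1)/(s+1)) = -t := by
        rw [htdef, ← Real.log_inv]
        congr 1
        field_simp
      rw [h2] at h1
      have e3 : (s-1)/(s+1) - 1 = -(2/(s+1)) := by field_simp; ring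
      rw [e3, neg_le_neg_iff] at h1
      refine le_trans ?_ h1
      rw [div_le_div_iff₀ (by linarith) (by linarith)]
      linarith
    have hLμ : 0 < L - μ := by linarith
    have hexp : Real.exp t = (s+1)/(s-1) := Real.exp_log (by positivity)
    have hs2 : s^2 = L/μ := Real.sq_sqrt (div_nonneg (by linarith) hμ.le)
    have hLval : L = μ * s^2 := by rw [hs2]; field_simp
    have hs21 : s^2 - 1 ≠ 0 := by nlinarith
    clear_value s
    have hcosh2 : Real.cosh t = (s^2+1)/(s^2-1) := by
      rw [Real.cosh_eq, Real.exp_neg, hexp]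
      field_simp
      ring
    have hcosh : Real.cosh t = (L+μ)/(L-μ) := by
      rw [hcosh2, hLval]
      rw [show μ * s^2 + μ = μ * (s^2+1) by ring, show μ * s^2 - μ = μ * (s^2-1) by ring,
        mul_div_mul_left _ _ hμ.ne']
    clear_value t
    set n : ℕ := ⌈Real.log (1/(2*δ)) / t⌉₊ with hndef
    have hlog2δ : 0 ≤ Real.log (1/(2*δ)) :=
      Real.log_nonneg (by rw [le_div_iff₀ (by positivity)]; linarith)
    have hnt : Real.log (1/(2*δ)) ≤ (n:ℝ) * t := by
      have h := Nat.le_ceil (Real.log (1/(2*δ)) / t)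
      have h' := mul_le_mul_of_nonneg_right h ht.le
      rwa [div_mul_cancel₀ _ ht.ne'] at h'
    have hn1 : (n:ℝ) < Real.log (1/(2*δ))/t + 1 := by
      rw [hndef]
      exact_mod_cast Nat.ceil_lt_add_one (by positivity)
    clear_value n
    have hcoshpos : 0 < Real.cosh ((n:ℝ)*t) := Real.cosh_pos _
    have hcoshn : 1/(4*δ) ≤ Real.cosh ((n:ℝ)*t) := by
      have h1 : Real.exp (Real.log (1/(2*δ))) ≤ Real.exp ((n:ℝ)*t) := Real.exp_le_exp.mpr hnt
      rw [Real.exp_log (by positivity)] at h1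
      have h2 : Real.exp ((n:ℝ)*t) / 2 ≤ Real.cosh ((n:ℝ)*t) := by
        rw [Real.cosh_eq]
        have := Real.exp_pos (-((n:ℝ)*t))
        linarith
      calc 1/(4*δ) = (1/(2*δ))/2 := by ring
        _ ≤ Real.exp ((n:ℝ)*t)/2 := by linarith
        _ ≤ _ := h2
    set a : ℝ := (L+μ)/(L-μ) with hadef
    set b : ℝ := -2/(L-μ) with hbdef
    set q : ℝ[X] := Polynomial.C (Real.cosh ((n:ℝ)*t))⁻¹ *
      ((T ℝ (n:ℤ)).comp (Polynomial.C a + Polynomial.C b * Polynomial.X)) with hqdef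
    clear_value a b q
    refine ⟨q, ?_, ?_, ?_⟩
    · -- degree bound
      have hdeg : q.natDegree ≤ n := by
        rw [hqdef]
        refine (natDegree_C_mul_le _ _).trans ?_
        refine (natDegree_comp_le).trans ?_
        have h1 : (Polynomial.C a + Polynomial.C b * Polynomial.X : ℝ[X]).natDegree ≤ 1 := by
          refine (natDegree_add_le _ _).trans ?_
          simp only [natDegree_C]
          have := (natDegree_C_mul_le b (Polynomial.X : ℝ[X])).trans natDegree_X_le
          omega
        have h2 := natDegree_T_le n
        calc (T ℝ (n:ℤ)).natDegree * (Polynomial.C a + Polynomial.C b * Polynomial.X : ℝ[X]).natDegree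
            ≤ n * 1 := Nat.mul_le_mul h2 h1
          _ = n := by omega
      have hloglog : Real.log (1/(2*δ)) ≤ Real.log (1/δ) := by
        apply Real.log_le_log (by positivity)
        rw [div_le_div_iff₀ (by positivity) hδ0]
        nlinarith
      have hst : 1 ≤ s * t := by
        calc (1:ℝ) = s * (1/s) := by field_simp
          _ ≤ s * t := mul_le_mul_of_nonneg_left hts (by linarith)
      have hdivs : Real.log (1/(2*δ))/t ≤ s * Real.log (1/δ) := by
        rw [div_le_iff₀ ht]
        nlinarith
      have hcast : (q.natDegree : ℝ) ≤ (n:ℝ) := by exact_mod_cast hdeg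
      clear hdeg hqdef
      nlinarith [mul_nonneg (le_trans zero_le_one hs.le) hlogδ]
    · -- eval at 0
      have hz : a + b * 0 = Real.cosh t := by rw [hcosh]; ring
      rw [hqdef]
      simp only [eval_mul, eval_C, eval_comp, eval_add, eval_X, hz]
      rw [show ((n:ℝ) * t) = ((n:ℤ):ℝ) * t by push_cast; ring]
      rw [_root_.T_real_cosh t (n:ℤ)]
      exact inv_mul_cancel₀ (by positivity)
    · -- bound on [μ, L]
      intro x hx
      have hzval : a + b * x = (L + μ - 2*x)/(L-μ) := by
        rw [hadef, hbdef]; field_simp; ring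
      have hz1 : -1 ≤ a + b * x := by
        rw [hzval, le_div_iff₀ hLμ]; nlinarith [hx.2]
      have hz2 : a + b * x ≤ 1 := by
        rw [hzval, div_le_one hLμ]; nlinarith [hx.1]
      have hTz : |(T ℝ (n:ℤ)).eval (a + b * x)| ≤ 1 := by
        rw [show a + b * x = Real.cos (Real.arccos (a + b*x)) from (Real.cos_arccos hz1 hz2).symm,
          T_real_cos]
        exact Real.abs_cos_le_one _
      rw [hqdef]
      simp only [eval_mul, eval_C, eval_comp, eval_add, eval_X]
      rw [abs_mul, abs_inv, abs_of_pos hcoshpos]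
      have hinv : (Real.cosh ((n:ℝ)*t))⁻¹ ≤ 4*δ := by
        rw [inv_le_comm₀ hcoshpos (by positivity)]
        calc (4*δ)⁻¹ = 1/(4*δ) := by rw [one_div]
          _ ≤ _ := hcoshn
      calc (Real.cosh ((n:ℝ)*t))⁻¹ * |(T ℝ (n:ℤ)).eval (a + b * x)|
          ≤ (Real.cosh ((n:ℝ)*t))⁻¹ * 1 :=
            mul_le_mul_of_nonneg_left hTz (by positivity)
        _ = (Real.cosh ((n:ℝ)*t))⁻¹ := mul_one _
        _ ≤ 4*δ := hinv
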